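/- Let t = (a,b,c) be a triplet of distinct indices. The STE loss K ↦ −log p_t^K is a convex function on the space of real n×n matrices. -/

import Mathlib

/-- The kernel squared distance `d²_K(a,b) = K_aa + K_bb - 2 K_ab`. -/
def d2 {n : ℕ} (K : Matrix (Fin n) (Fin n) ℝ) (a b : Fin n) : ℝ :=
  K a a + K b b - 2 * K a b

/-- The STE satisfaction probability of the triplet `(a,b,c)` under kernel `K`. -/
noncomputable def pSTE {n : ℕ} (K : Matrix (Fin n) (Fin n) ℝ) (a b c : Fin n) : ℝ :=
  Real.exp (-(d2 K a b)) / (Real.exp (-(d2 K a b)) + Real.exp (-(d2 K a c)))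

lemma one_add_exp_pos' (x : ℝ) : (0:ℝ) < 1 + Real.exp x := by positivity

lemma softplus_hasDerivAt (x : ℝ) :
    HasDerivAt (fun x : ℝ => Real.log (1 + Real.exp x)) (Real.exp x / (1 + Real.exp x)) x := by
  have h : HasDerivAt (fun x : ℝ => 1 + Real.exp x) (Real.exp x) x :=
    (Real.hasDerivAt_exp x).const_add 1
  simpa using h.log (one_add_exp_pos' x).ne'

lemma softplus_deriv :
    deriv (fun x : ℝ => Real.log (1 + Real.exp x)) =
      fun x => Real.exp x / (1 + Real.exp x) := by
  funext x
  exact (softplus_hasDerivAt x).deriv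

lemma logistic_hasDerivAt (x : ℝ) :
    HasDerivAt (fun x : ℝ => Real.exp x / (1 + Real.exp x))
      (Real.exp x / (1 + Real.exp x) ^ 2) x := by
  have h1 : HasDerivAt (fun x : ℝ => 1 + Real.exp x) (Real.exp x) x :=
    (Real.hasDerivAt_exp x).const_add 1
  have := (Real.hasDerivAt_exp x).div h1 (one_add_exp_pos' x).ne'
  refine this.congr_deriv ?_
  field_simp
  ring

lemma softplus_convexOn :
    ConvexOn ℝ Set.univ (fun x : ℝ => Real.log (1 + Real.exp x)) := by
  apply convexOn_univ_of_deriv2_nonneg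
  · exact fun x => (softplus_hasDerivAt x).differentiableAt
  · rw [softplus_deriv]
    exact fun x => (logistic_hasDerivAt x).differentiableAt
  · intro x
    rw [Function.iterate_succ, Function.iterate_one, Function.comp_apply, softplus_deriv,
      (logistic_hasDerivAt x).deriv]
    positivity

/-- The linear functional `K ↦ d²_K(a,b) - d²_K(a,c)`. -/
def dDiff {n : ℕ} (a b c : Fin n) : Matrix (Fin n) (Fin n) ℝ →ₗ[ℝ] ℝ where
  toFun K := d2 K a b - d2 K a c
  map_add' K L := by simp [d2, Matrix.add_apply]; ring
  map_smul' r K := by simp [d2, Matrix.smul_apply, smul_eq_mul]; ring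

lemma ste_loss_eq {n : ℕ} (a b c : Fin n) (K : Matrix (Fin n) (Fin n) ℝ) :
    -Real.log (pSTE K a b c) = Real.log (1 + Real.exp (d2 K a b - d2 K a c)) := by
  set u := d2 K a b
  set v := d2 K a c
  have hsum : (0:ℝ) < Real.exp (-u) + Real.exp (-v) := by positivity
  have h1 : (1 + Real.exp (u - v)) = (Real.exp (-u) + Real.exp (-v)) / Real.exp (-u) := by
    rw [eq_div_iff (Real.exp_ne_zero _), add_mul, one_mul, ← Real.exp_add]
    ring_nf
  rw [pSTE, h1, Real.log_div hsum.ne' (Real.exp_ne_zero _),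
    Real.log_div (Real.exp_ne_zero _) hsum.ne', Real.log_exp]
  ring

/-- The STE loss `K ↦ -log p_t^K` is convex on the space of real `n × n` matrices. -/
theorem ste_loss_convexOn {n : ℕ} (a b c : Fin n)
    (hab : a ≠ b) (hac : a ≠ c) (hbc : b ≠ c) :
    ConvexOn ℝ Set.univ
      (fun K : Matrix (Fin n) (Fin n) ℝ => -Real.log (pSTE K a b c)) := by
  have h := softplus_convexOn.comp_linearMap (dDiff a b c)
  simp only [Set.preimage_univ] at h
  convert h using 2 with K
  swap
  exact ste_loss_eq a b c K
  rfl
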